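/- Let q, β > 0 and f : ℝ → ℝ be bounded and continuous. Then for every θ > 0 and n ∈ ℕ, ω(B*_n(f), θ) ≤ ω(f, θ), where B*_n is the Kantorovich-type convolution operator. -/

import Mathlib

open MeasureTheory Filter Real

noncomputable def nu (q β x : ℝ) : ℝ :=
  (1 - q * Real.exp (-β * x)) / (1 + q * Real.exp (-β * x))

noncomputable def G (q β x : ℝ) : ℝ := (1/4) * (nu q β (x+1) - nu q β (x-1))

noncomputable def Psi (q β x : ℝ) : ℝ := (G q β x + G (1/q) β x) / 2

noncomputable def omega (f : ℝ → ℝ) (θ : ℝ) : ℝ :=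
  sSup {d : ℝ | ∃ x y : ℝ, |x - y| ≤ θ ∧ d = |f x - f y|}

noncomputable def supNorm (f : ℝ → ℝ) : ℝ := ⨆ x : ℝ, |f x|

noncomputable def Bstar (q β : ℝ) (n : ℕ) (f : ℝ → ℝ) (x : ℝ) : ℝ :=
  (n : ℝ) * ∫ h : ℝ, (∫ t in (0:ℝ)..(1 / n), f (t + x - h / n)) * Psi q β h

section Aux

open Set

lemma nu_mono (q β : ℝ) (hq : 0 < q) (hβ : 0 < β) {a b : ℝ} (hab : a ≤ b) :
    nu q β a ≤ nu q β b := by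
  have ht : Real.exp (-β * b) ≤ Real.exp (-β * a) :=
    Real.exp_le_exp.2 (by nlinarith)
  have h1 : 0 < 1 + q * Real.exp (-β * a) := by positivity
  have h2 : 0 < 1 + q * Real.exp (-β * b) := by positivity
  rw [nu, nu, div_le_div_iff₀ h1 h2]
  nlinarith [Real.exp_pos (-β * a), Real.exp_pos (-β * b)]

lemma G_nonneg (q β : ℝ) (hq : 0 < q) (hβ : 0 < β) (x : ℝ) : 0 ≤ G q β x := by
  have := nu_mono q β hq hβ (show x - 1 ≤ x + 1 by linarith)
  rw [G]; linarith

lemma Psi_nonneg (q β : ℝ) (hq : 0 < q) (hβ : 0 < β) (x : ℝ) : 0 ≤ Psi q β x := by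
  have h1 := G_nonneg q β hq hβ x
  have h2 := G_nonneg (1/q) β (by positivity) hβ x
  rw [Psi]; linarith

lemma continuous_nu (q β : ℝ) (hq : 0 < q) : Continuous (nu q β) := by
  apply Continuous.div
  · continuity
  · continuity
  · intro x; have : 0 < 1 + q * Real.exp (-β * x) := by positivity
    linarith

lemma continuous_G (q β : ℝ) (hq : 0 < q) : Continuous (G q β) := by
  apply Continuous.mul continuous_const
  exact ((continuous_nu q β hq).comp (by continuity)).sub
    ((continuous_nu q β hq).comp (by continuity))

lemma continuous_Psi (q β : ℝ) (hq : 0 < q) : Continuous (Psi q β) := by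
  apply Continuous.div_const
  exact (continuous_G q β hq).add (continuous_G (1/q) β (by positivity))

lemma G_neg (q β : ℝ) (hq : 0 < q) (x : ℝ) : G q β (-x) = G (1/q) β x := by
  have key : ∀ y : ℝ, nu q β (-y) = - nu (1/q) β y := by
    intro y
    have e1 : Real.exp (-β * -y) = 1 / Real.exp (-β * y) := by
      rw [one_div, ← Real.exp_neg]; ring_nf
    rw [nu, nu, e1]
    have hE := Real.exp_pos (-β * y)
    have h2 : 0 < 1 + (1/q) * Real.exp (-β * y) := by positivity
    have h1 : 0 < 1 + q * (1 / Real.exp (-β * y)) := by positivity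
    rw [← neg_div, div_eq_div_iff h1.ne' h2.ne']
    field_simp
    ring
  rw [G, G, show -x + 1 = -(x - 1) by ring, show -x - 1 = -(x + 1) by ring,
    key, key]
  ring

noncomputable def Haux (q β x : ℝ) : ℝ :=
  (1/(2*β)) * (Real.log (1 + q * Real.exp (-β * (x+1))) - Real.log (1 + q * Real.exp (-β * (x-1))))

lemma hasDerivAt_aux (q β c : ℝ) (hq : 0 < q) (x : ℝ) :
    HasDerivAt (fun x => Real.log (1 + q * Real.exp (-β * (x + c))))
      (q * Real.exp (-β * (x + c)) * (-β) / (1 + q * Real.exp (-β * (x + c)))) x := by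
  have h1 : HasDerivAt (fun x : ℝ => -β * (x + c)) (-β) x := by
    simpa using ((hasDerivAt_id x).add_const c).const_mul (-β)
  have h2 : HasDerivAt (fun x : ℝ => 1 + q * Real.exp (-β * (x + c)))
      (q * Real.exp (-β * (x + c)) * (-β)) x := by
    simpa [mul_comm, mul_assoc, mul_left_comm] using (h1.exp.const_mul q).const_add 1
  have hpos : (0:ℝ) < 1 + q * Real.exp (-β * (x + c)) := by positivity
  exact h2.log hpos.ne'

lemma hasDerivAt_Haux (q β : ℝ) (hq : 0 < q) (hβ : 0 < β) (x : ℝ) :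
    HasDerivAt (Haux q β) (G q β x) x := by
  have d1 := hasDerivAt_aux q β 1 hq x
  have d0 := hasDerivAt_aux q β (-1) hq x
  have hH : Haux q β = fun x => (1/(2*β)) * (Real.log (1 + q * Real.exp (-β * (x+1))) - Real.log (1 + q * Real.exp (-β * (x + -1)))) := by
    funext y; simp only [Haux, show y + -1 = y - 1 by ring]
  have p1 : (0:ℝ) < 1 + q * Real.exp (-β * (x+1)) := by positivity
  have p0 : (0:ℝ) < 1 + q * Real.exp (-β * (x + -1)) := by positivity
  have key : G q β x = (1/(2*β)) * ((q * Real.exp (-β * (x+1)) * (-β) / (1 + q * Real.exp (-β * (x+1)))) - (q * Real.exp (-β * (x + -1)) * (-β) / (1 + q * Real.exp (-β * (x + -1))))) := by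
    simp only [G, nu, show x + -1 = x - 1 by ring] at *
    field_simp
    ring
  rw [hH, key]
  exact (d1.sub d0).const_mul (1/(2*β))

lemma tendsto_Haux_atTop (q β : ℝ) (hq : 0 < q) (hβ : 0 < β) :
    Tendsto (Haux q β) atTop (nhds 0) := by
  have key : ∀ c : ℝ, Tendsto (fun x => Real.log (1 + q * Real.exp (-β * (x + c)))) atTop (nhds 0) := by
    intro c
    have h1 : Tendsto (fun x : ℝ => -β * (x + c)) atTop atBot := by
      apply Tendsto.const_mul_atTop_of_neg (by linarith : -β < 0)
      exact tendsto_atTop_add_const_right _ c tendsto_id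
    have h2 : Tendsto (fun x => 1 + q * Real.exp (-β * (x + c))) atTop (nhds 1) := by
      have := (Real.tendsto_exp_atBot.comp h1).const_mul q
      simpa using (tendsto_const_nhds (x := (1:ℝ))).add this
    have := (Real.continuousAt_log (by norm_num : (1:ℝ) ≠ 0)).tendsto.comp h2
    simpa [Function.comp_def] using this
  refine Tendsto.congr (f₁ := fun x => (1/(2*β)) * (Real.log (1 + q * Real.exp (-β * (x + 1))) - Real.log (1 + q * Real.exp (-β * (x + -1))))) (fun x => by simp only [Haux, show x + -1 = x - 1 by ring]) ?_
  simpa using ((key 1).sub (key (-1))).const_mul (1/(2*β))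

lemma tendsto_Haux_atBot (q β : ℝ) (hq : 0 < q) (hβ : 0 < β) :
    Tendsto (Haux q β) atBot (nhds (-1)) := by
  have hrw : ∀ x : ℝ, Haux q β x =
      (1/(2*β)) * Real.log ((Real.exp (β*x) + q * Real.exp (-β)) / (Real.exp (β*x) + q * Real.exp β)) := by
    intro x
    have p1 : (0:ℝ) < 1 + q * Real.exp (-β * (x+1)) := by positivity
    have p0 : (0:ℝ) < 1 + q * Real.exp (-β * (x-1)) := by positivity
    rw [Haux, ← Real.log_div p1.ne' p0.ne']
    congr 1
    have e1 : Real.exp (-β * (x+1)) = Real.exp (-β) / Real.exp (β * x) := by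
      rw [← Real.exp_sub]; ring_nf
    have e0 : Real.exp (-β * (x-1)) = Real.exp β / Real.exp (β * x) := by
      rw [← Real.exp_sub]; ring_nf
    rw [e1, e0]
    have hE := Real.exp_pos (β * x)
    field_simp
  have h1 : Tendsto (fun x : ℝ => Real.exp (β * x)) atBot (nhds 0) := by
    apply Real.tendsto_exp_atBot.comp
    exact Tendsto.const_mul_atBot hβ tendsto_id
  have h2 : Tendsto (fun x : ℝ => (Real.exp (β*x) + q * Real.exp (-β)) / (Real.exp (β*x) + q * Real.exp β))
      atBot (nhds ((q * Real.exp (-β)) / (q * Real.exp β))) := by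
    have hn : Tendsto (fun x : ℝ => Real.exp (β*x) + q * Real.exp (-β)) atBot (nhds (0 + q * Real.exp (-β))) :=
      h1.add tendsto_const_nhds
    have hd : Tendsto (fun x : ℝ => Real.exp (β*x) + q * Real.exp β) atBot (nhds (0 + q * Real.exp β)) :=
      h1.add tendsto_const_nhds
    have : (0:ℝ) + q * Real.exp β ≠ 0 := by positivity
    simpa [Pi.div_def] using hn.div hd this
  have hval : (q * Real.exp (-β)) / (q * Real.exp β) = Real.exp (-(2*β)) := by
    rw [mul_div_mul_left _ _ hq.ne', ← Real.exp_sub]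
    ring_nf
  have h3 : Tendsto (fun x : ℝ => Real.log ((Real.exp (β*x) + q * Real.exp (-β)) / (Real.exp (β*x) + q * Real.exp β)))
      atBot (nhds (-(2*β))) := by
    have hpos : (q * Real.exp (-β)) / (q * Real.exp β) ≠ 0 := by positivity
    have := (Real.continuousAt_log hpos).tendsto.comp h2
    simpa [hval, Real.log_exp, Function.comp_def] using this
  have := h3.const_mul (1/(2*β))
  have heq : (1/(2*β)) * (-(2*β)) = -1 := by field_simp
  rw [heq] at this
  exact Tendsto.congr (fun x => (hrw x).symm) this

lemma integrableOn_G_Ioi (q β : ℝ) (hq : 0 < q) (hβ : 0 < β) :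
    IntegrableOn (G q β) (Ioi 0) := by
  exact integrableOn_Ioi_deriv_of_nonneg' (fun x _ => hasDerivAt_Haux q β hq hβ x)
    (fun x _ => G_nonneg q β hq hβ x) (tendsto_Haux_atTop q β hq hβ)

lemma integrableOn_G_Iic (q β : ℝ) (hq : 0 < q) (hβ : 0 < β) :
    IntegrableOn (G q β) (Iic 0) := by
  have h1 : IntegrableOn (G (1/q) β) (Ioi 0) := integrableOn_G_Ioi (1/q) β (by positivity) hβ
  have h2 : IntegrableOn ((G (1/q) β) ∘ Neg.neg) (Neg.neg ⁻¹' (Ioi (0:ℝ))) :=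
    (MeasurePreserving.integrableOn_comp_preimage (Measure.measurePreserving_neg _)
      (Homeomorph.neg ℝ).measurableEmbedding).2 h1
  have h3 : IntegrableOn (G q β) (Iio (0:ℝ)) := by
    have hs : (Neg.neg ⁻¹' (Ioi (0:ℝ)) : Set ℝ) = Iio 0 := by
      ext z; simp
    rw [hs] at h2
    refine h2.congr_fun (fun z _ => ?_) measurableSet_Iio
    simp only [Function.comp_apply]
    rw [G_neg (1/q) β (by positivity) z, one_div_one_div]
  rwa [integrableOn_Iic_iff_integrableOn_Iio]

lemma integrable_G (q β : ℝ) (hq : 0 < q) (hβ : 0 < β) : Integrable (G q β) := by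
  have := (integrableOn_G_Iic q β hq hβ).union (integrableOn_G_Ioi q β hq hβ)
  rwa [Iic_union_Ioi, integrableOn_univ] at this

lemma integral_G (q β : ℝ) (hq : 0 < q) (hβ : 0 < β) : ∫ x, G q β x = 1 := by
  have hIic : ∫ x in Iic (0:ℝ), G q β x = Haux q β 0 - (-1) :=
    integral_Iic_of_hasDerivAt_of_tendsto
      (hasDerivAt_Haux q β hq hβ 0).continuousAt.continuousWithinAt
      (fun x _ => hasDerivAt_Haux q β hq hβ x) (integrableOn_G_Iic q β hq hβ)
      (tendsto_Haux_atBot q β hq hβ)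
  have hIoi : ∫ x in Ioi (0:ℝ), G q β x = 0 - Haux q β 0 :=
    integral_Ioi_of_hasDerivAt_of_tendsto' (fun x _ => hasDerivAt_Haux q β hq hβ x)
      (integrableOn_G_Ioi q β hq hβ) (tendsto_Haux_atTop q β hq hβ)
  rw [← intervalIntegral.integral_Iic_add_Ioi (integrableOn_G_Iic q β hq hβ)
    (integrableOn_G_Ioi q β hq hβ), hIic, hIoi]
  ring

lemma integrable_Psi (q β : ℝ) (hq : 0 < q) (hβ : 0 < β) : Integrable (Psi q β) := by
  have := ((integrable_G q β hq hβ).add (integrable_G (1/q) β (by positivity) hβ)).div_const 2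
  exact this.congr (Filter.Eventually.of_forall (fun x => rfl))

lemma integral_Psi (q β : ℝ) (hq : 0 < q) (hβ : 0 < β) : ∫ x, Psi q β x = 1 := by
  simp only [Psi]
  rw [integral_div, integral_add (integrable_G q β hq hβ) (integrable_G (1/q) β (by positivity) hβ),
    integral_G q β hq hβ, integral_G (1/q) β (by positivity) hβ]
  norm_num

end Aux

theorem Bstar_global_smoothness (q β : ℝ) (hq : 0 < q) (hβ : 0 < β) (n : ℕ)
    (f : ℝ → ℝ) (hf : Continuous f) (hfb : ∃ M : ℝ, ∀ x : ℝ, |f x| ≤ M)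
    (θ : ℝ) (hθ : 0 < θ) :
    omega (Bstar q β n f) θ ≤ omega f θ := by
  obtain ⟨M, hM⟩ := hfb
  have hbdd : BddAbove {d : ℝ | ∃ x y : ℝ, |x - y| ≤ θ ∧ d = |f x - f y|} := by
    refine ⟨M + M, ?_⟩
    rintro d ⟨x, y, -, rfl⟩
    calc |f x - f y| ≤ |f x| + |f y| := abs_sub _ _
      _ ≤ M + M := add_le_add (hM x) (hM y)
  have hub : ∀ a b : ℝ, |a - b| ≤ θ → |f a - f b| ≤ omega f θ := fun a b h =>
    le_csSup hbdd ⟨a, b, h, rfl⟩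
  have hω0 : 0 ≤ omega f θ := by
    have := hub 0 0 (by simpa using hθ.le)
    simpa using this
  have key : ∀ x y : ℝ, |x - y| ≤ θ → |Bstar q β n f x - Bstar q β n f y| ≤ omega f θ := by
    intro x y hxy
    rcases Nat.eq_zero_or_pos n with hn | hn
    · subst hn
      simpa [Bstar] using hω0
    have hn' : (0:ℝ) < (n:ℝ) := by exact_mod_cast hn
    set F : ℝ → ℝ := fun z => ∫ t in (0:ℝ)..z, f t with hFdef
    have hFcont : Continuous F :=
      intervalIntegral.continuous_primitive (fun a b => hf.intervalIntegrable a b) 0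
    have hKrw : ∀ c : ℝ, (∫ t in (0:ℝ)..(1/(n:ℝ)), f (t + c)) = F (1/(n:ℝ) + c) - F c := by
      intro c
      rw [intervalIntegral.integral_comp_add_right (f := f) (d := c), zero_add, hFdef]
      exact (intervalIntegral.integral_interval_sub_left
        (hf.intervalIntegrable _ _) (hf.intervalIntegrable _ _)).symm
    have hB : ∀ z : ℝ, Bstar q β n f z
        = (n:ℝ) * ∫ h : ℝ, (F (1/(n:ℝ) + (z - h/(n:ℝ))) - F (z - h/(n:ℝ))) * Psi q β h := by
      intro z
      rw [Bstar]
      congr 1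
      have : (fun h : ℝ => (∫ t in (0:ℝ)..(1/(n:ℝ)), f (t + z - h/(n:ℝ))) * Psi q β h)
          = fun h : ℝ => (F (1/(n:ℝ) + (z - h/(n:ℝ))) - F (z - h/(n:ℝ))) * Psi q β h := by
        funext h
        congr 1
        rw [← hKrw (z - h/(n:ℝ))]
        simp only [add_sub_assoc]
      rw [this]
    have hKb : ∀ c : ℝ, |F (1/(n:ℝ) + c) - F c| ≤ M * |1/(n:ℝ)| := by
      intro c
      rw [← hKrw c]
      have := intervalIntegral.norm_integral_le_of_norm_le_const
        (C := M) (f := fun t => f (t + c)) (a := (0:ℝ)) (b := 1/(n:ℝ))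
        (fun t _ => by simpa [Real.norm_eq_abs] using hM (t + c))
      simpa [Real.norm_eq_abs] using this
    have hcont : ∀ z : ℝ, Continuous
        (fun h : ℝ => F (1/(n:ℝ) + (z - h/(n:ℝ))) - F (z - h/(n:ℝ))) := by
      intro z
      exact (hFcont.comp (by continuity)).sub (hFcont.comp (by continuity))
    have hint : ∀ z : ℝ, Integrable
        (fun h : ℝ => (F (1/(n:ℝ) + (z - h/(n:ℝ))) - F (z - h/(n:ℝ))) * Psi q β h) := by
      intro z
      refine (integrable_Psi q β hq hβ).bdd_mul (c := M * |1/(n:ℝ)|)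
        (hcont z).aestronglyMeasurable (Filter.Eventually.of_forall fun h => ?_)
      simpa [Real.norm_eq_abs] using hKb (z - h/(n:ℝ))
    have hD : ∀ h : ℝ,
        |(F (1/(n:ℝ) + (x - h/(n:ℝ))) - F (x - h/(n:ℝ)))
          - (F (1/(n:ℝ) + (y - h/(n:ℝ))) - F (y - h/(n:ℝ)))| ≤ omega f θ * |1/(n:ℝ)| := by
      intro h
      have i1 : IntervalIntegrable (fun t : ℝ => f (t + (x - h/(n:ℝ)))) volume 0 (1/(n:ℝ)) :=
        (hf.comp (by continuity)).intervalIntegrable _ _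
      have i2 : IntervalIntegrable (fun t : ℝ => f (t + (y - h/(n:ℝ)))) volume 0 (1/(n:ℝ)) :=
        (hf.comp (by continuity)).intervalIntegrable _ _
      rw [← hKrw (x - h/(n:ℝ)), ← hKrw (y - h/(n:ℝ)), ← intervalIntegral.integral_sub i1 i2]
      have := intervalIntegral.norm_integral_le_of_norm_le_const
        (C := omega f θ) (a := (0:ℝ)) (b := 1/(n:ℝ))
        (f := fun t => f (t + (x - h/(n:ℝ))) - f (t + (y - h/(n:ℝ))))
        (fun t _ => by
          rw [Real.norm_eq_abs]
          exact hub _ _ (by rw [show (t + (x - h/(n:ℝ))) - (t + (y - h/(n:ℝ))) = x - y by ring]; exact hxy))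
      simpa [Real.norm_eq_abs] using this
    have hsub : Bstar q β n f x - Bstar q β n f y
        = (n:ℝ) * ∫ h : ℝ, ((F (1/(n:ℝ) + (x - h/(n:ℝ))) - F (x - h/(n:ℝ)))
            - (F (1/(n:ℝ) + (y - h/(n:ℝ))) - F (y - h/(n:ℝ)))) * Psi q β h := by
      rw [hB x, hB y, ← mul_sub, ← integral_sub (hint x) (hint y)]
      simp only [sub_mul]
    rw [hsub, abs_mul, abs_of_nonneg hn'.le]
    have hI : |∫ h : ℝ, ((F (1/(n:ℝ) + (x - h/(n:ℝ))) - F (x - h/(n:ℝ)))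
        - (F (1/(n:ℝ) + (y - h/(n:ℝ))) - F (y - h/(n:ℝ)))) * Psi q β h|
        ≤ omega f θ * |1/(n:ℝ)| := by
      have hbody := norm_integral_le_of_norm_le
        (f := fun h : ℝ => ((F (1/(n:ℝ) + (x - h/(n:ℝ))) - F (x - h/(n:ℝ)))
            - (F (1/(n:ℝ) + (y - h/(n:ℝ))) - F (y - h/(n:ℝ)))) * Psi q β h)
        ((integrable_Psi q β hq hβ).const_mul (omega f θ * |1/(n:ℝ)|))
        (Filter.Eventually.of_forall (fun h => by
          rw [Real.norm_eq_abs, abs_mul, abs_of_nonneg (Psi_nonneg q β hq hβ h)]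
          exact mul_le_mul_of_nonneg_right (hD h) (Psi_nonneg q β hq hβ h)))
      rw [Real.norm_eq_abs] at hbody
      refine hbody.trans (le_of_eq ?_)
      rw [integral_const_mul, integral_Psi q β hq hβ, mul_one]
    calc (n:ℝ) * |∫ h : ℝ, ((F (1/(n:ℝ) + (x - h/(n:ℝ))) - F (x - h/(n:ℝ)))
          - (F (1/(n:ℝ) + (y - h/(n:ℝ))) - F (y - h/(n:ℝ)))) * Psi q β h|
        ≤ (n:ℝ) * (omega f θ * |1/(n:ℝ)|) := by
          exact mul_le_mul_of_nonneg_left hI hn'.le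
      _ = omega f θ := by
          rw [abs_of_nonneg (by positivity : (0:ℝ) ≤ 1/(n:ℝ))]
          field_simp
  rw [omega]
  apply Real.sSup_le
  · rintro d ⟨x, y, hxy, rfl⟩
    exact key x y hxy
  · exact hω0
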